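/- There is an absolute constant c >= 1 such that the following holds. Let Delta >= 2 be an integer, C >= 1 a real number, and k an integer with k >= c * C * ln(Delta). Let N be a finite set, p : N -> [0,1], and let (b_{j,u})_{j in {1,...,k}, u in N} be mutually independent Bernoulli random variables where b_{j,u} has parameter p(u). Set d = sum_{u in N} p(u) and, for each j, set dhat^j = |{u in N : b_{j,u} = 1}|. Then with probability at least 1 - 1/Delta^C all of the following hold simultaneously: (1) if d > 20, then dhat^j >= 2 for more than half of the indices j in {1,...,k}; (2) dhat^j <= 4*d for more than half of the indices j in {1,...,k}; (3) if d < 0.4, then dhat^j < 2 for more than half of the indices j in {1,...,k}. -/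

import Mathlib

open Finset

section Comb
variable {N : Type} [Fintype N] [DecidableEq N]

/-- weight of an outcome -/
noncomputable def wtAux (p : N → ℝ) (s : N → Bool) : ℝ :=
  ∏ u, (if s u = true then p u else 1 - p u)

lemma sum_prod_pi {ι S : Type} [Fintype ι] [DecidableEq ι] [Fintype S]
    (f : ι → S → ℝ) :
    ∑ y : ι → S, ∏ i, f i (y i) = ∏ i, ∑ s, f i s :=
  (Fintype.prod_sum f).symm

omit [DecidableEq N] in
lemma wtAux_nonneg {p : N → ℝ} (hp : ∀ u, p u ∈ Set.Icc (0:ℝ) 1) (s : N → Bool) :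
    0 ≤ wtAux p s := by
  refine Finset.prod_nonneg fun u _ => ?_
  rcases (hp u) with ⟨h0, h1⟩
  split <;> linarith

lemma wtAux_sum_one (p : N → ℝ) :
    ∑ s : N → Bool, wtAux p s = 1 := by
  unfold wtAux
  rw [sum_prod_pi (fun u b => if b = true then p u else 1 - p u)]
  simp

/-- conditioned weight: the total weight of outcomes agreeing with `e` on `A`. -/
lemma wtAux_marginal (p : N → ℝ) (A : Finset N) (e : N → Bool) :
    ∑ s ∈ univ.filter (fun s : N → Bool => ∀ u ∈ A, s u = e u), wtAux p s
      = ∏ u ∈ A, (if e u = true then p u else 1 - p u) := by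
  classical
  rw [Finset.sum_filter]
  have hpt : ∀ s : N → Bool,
      (if (∀ u ∈ A, s u = e u) then wtAux p s else 0)
        = ∏ u, (if u ∈ A then (if s u = e u then (if s u = true then p u else 1 - p u) else 0)
            else (if s u = true then p u else 1 - p u)) := by
    intro s
    by_cases h : ∀ u ∈ A, s u = e u
    · rw [if_pos h]
      unfold wtAux
      refine Finset.prod_congr rfl fun u _ => ?_
      by_cases hu : u ∈ A
      · rw [if_pos hu, if_pos (h u hu)]
      · rw [if_neg hu]
    · rw [if_neg h]
      push_neg at h
      obtain ⟨u, hu, hne⟩ := h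
      refine (Finset.prod_eq_zero (Finset.mem_univ u) ?_).symm
      rw [if_pos hu, if_neg hne]
  simp_rw [hpt]
  rw [sum_prod_pi (fun u b => if u ∈ A then (if b = e u then (if b = true then p u else 1 - p u) else 0)
            else (if b = true then p u else 1 - p u))]
  have : ∀ u : N, (∑ b : Bool, (if u ∈ A then (if b = e u then (if b = true then p u else 1 - p u) else 0)
            else (if b = true then p u else 1 - p u)))
      = (if u ∈ A then (if e u = true then p u else 1 - p u) else 1) := by
    intro u
    by_cases hu : u ∈ A <;> simp [hu, Fintype.sum_bool] <;> cases e u <;> simp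
  simp_rw [this]
  rw [Finset.prod_ite_mem]
  simp

end Comb

section QBounds
variable {N : Type} [Fintype N] [DecidableEq N] {p : N → ℝ}

lemma wtAux_marg_one (p : N → ℝ) (u : N) :
    ∑ s ∈ univ.filter (fun s : N → Bool => s u = true), wtAux p s = p u := by
  have h := wtAux_marginal p {u} (fun _ => true)
  simpa using h

lemma wtAux_marg_pair (p : N → ℝ) {u v : N} (huv : u ≠ v) :
    ∑ s ∈ univ.filter (fun s : N → Bool => s u = true ∧ s v = true), wtAux p s
      = p u * p v := by
  have h := wtAux_marginal p {u, v} (fun _ => true)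
  rw [Finset.prod_pair huv] at h
  simp only [if_true] at h
  rw [← h]
  apply Finset.sum_congr
  · apply Finset.filter_congr
    intro s _
    simp [Finset.mem_insert]
  · intro _ _; rfl

lemma sum_card_mul_wt (hp : ∀ u, p u ∈ Set.Icc (0:ℝ) 1) :
    ∑ s : N → Bool, ((univ.filter (fun u => s u = true)).card : ℝ) * wtAux p s
      = ∑ u, p u := by
  have h1 : ∀ s : N → Bool, ((univ.filter (fun u => s u = true)).card : ℝ) * wtAux p s
      = ∑ u : N, (if s u = true then wtAux p s else 0) := by
    intro s
    rw [Finset.card_filter]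
    push_cast
    rw [Finset.sum_mul]
    refine Finset.sum_congr rfl fun u _ => ?_
    split <;> simp
  simp_rw [h1]
  rw [Finset.sum_comm]
  refine Finset.sum_congr rfl fun u _ => ?_
  rw [← Finset.sum_filter]
  exact wtAux_marg_one p u

/-- Markov: weight of `4d < dhat` is at most 1/4. -/
lemma qbound2 (hp : ∀ u, p u ∈ Set.Icc (0:ℝ) 1) :
    ∑ s ∈ univ.filter (fun s : N → Bool =>
        4 * (∑ u, p u) < ((univ.filter (fun u => s u = true)).card : ℝ)), wtAux p s
      ≤ 1/4 := by
  classical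
  set d := ∑ u, p u with hd
  have hd0 : 0 ≤ d := Finset.sum_nonneg fun u _ => (hp u).1
  rcases eq_or_lt_of_le hd0 with hdeq | hdpos
  · -- d = 0 : all p u = 0, every bad outcome has weight 0
    have hall : ∀ u, p u = 0 := by
      intro u
      have := (Finset.sum_eq_zero_iff_of_nonneg (fun u _ => (hp u).1)).1 hdeq.symm
      exact this u (Finset.mem_univ u)
    have hz : ∀ s ∈ univ.filter (fun s : N → Bool =>
        4 * d < ((univ.filter (fun u => s u = true)).card : ℝ)), wtAux p s = 0 := by
      intro s hs
      rw [Finset.mem_filter] at hs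
      have hcard : 0 < (univ.filter (fun u => s u = true)).card := by
        have := hs.2
        rw [← hdeq] at this
        norm_num at this
        exact Finset.card_pos.2 this
      obtain ⟨u, hu⟩ := Finset.card_pos.1 hcard
      rw [Finset.mem_filter] at hu
      exact Finset.prod_eq_zero (Finset.mem_univ u) (by rw [if_pos hu.2, hall u])
    rw [Finset.sum_congr rfl hz]
    simp
  · -- d > 0 : Markov
    have key := sum_card_mul_wt hp
    rw [← hd] at key
    have step : ∀ s ∈ univ.filter (fun s : N → Bool =>
        4 * d < ((univ.filter (fun u => s u = true)).card : ℝ)), wtAux p s ≤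
        (1/(4*d)) * (((univ.filter (fun u => s u = true)).card : ℝ) * wtAux p s) := by
      intro s hs
      rw [Finset.mem_filter] at hs
      have hw := wtAux_nonneg hp s
      rw [← mul_assoc]
      have h1 : (1:ℝ) ≤ 1/(4*d) * ((univ.filter (fun u => s u = true)).card : ℝ) := by
        rw [one_div_mul_eq_div, le_div_iff₀ (by linarith)]
        linarith [hs.2]
      exact le_mul_of_one_le_left hw h1
    calc ∑ s ∈ univ.filter (fun s : N → Bool =>
        4 * d < ((univ.filter (fun u => s u = true)).card : ℝ)), wtAux p s
        ≤ ∑ s ∈ univ.filter (fun s : N → Bool =>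
        4 * d < ((univ.filter (fun u => s u = true)).card : ℝ)),
          (1/(4*d)) * (((univ.filter (fun u => s u = true)).card : ℝ) * wtAux p s) :=
          Finset.sum_le_sum step
      _ ≤ ∑ s : N → Bool,
          (1/(4*d)) * (((univ.filter (fun u => s u = true)).card : ℝ) * wtAux p s) := by
          refine Finset.sum_le_sum_of_subset_of_nonneg (Finset.filter_subset _ _) ?_
          intro s _ _
          have hw := wtAux_nonneg hp s
          positivity
      _ = (1/(4*d)) * d := by rw [← Finset.mul_sum, key]
      _ = 1/4 := by
          have hne : d ≠ 0 := ne_of_gt hdpos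
          field_simp

section QB13
variable {N : Type} [Fintype N] [DecidableEq N] {p : N → ℝ}

/-- pair bound: weight of `2 ≤ dhat` is at most `d²`. -/
lemma qbound3 (hp : ∀ u, p u ∈ Set.Icc (0:ℝ) 1) :
    ∑ s ∈ univ.filter (fun s : N → Bool =>
        2 ≤ (univ.filter (fun u => s u = true)).card), wtAux p s
      ≤ (∑ u, p u) * (∑ u, p u) := by
  classical
  have hnn : ∀ (s : N → Bool) (q : N × N),
      (0:ℝ) ≤ (if s q.1 = true ∧ s q.2 = true then wtAux p s else 0) := by
    intro s q
    have := wtAux_nonneg hp s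
    split <;> simp [this]
  have hpair : ∀ s ∈ univ.filter (fun s : N → Bool =>
      2 ≤ (univ.filter (fun u => s u = true)).card),
      wtAux p s ≤ ∑ q ∈ univ.offDiag,
        (if s q.1 = true ∧ s q.2 = true then wtAux p s else 0) := by
    intro s hs
    rw [Finset.mem_filter] at hs
    obtain ⟨u, hu, v, hv, huv⟩ := Finset.one_lt_card.1 hs.2
    rw [Finset.mem_filter] at hu hv
    have hmem : (u, v) ∈ univ.offDiag :=
      Finset.mem_offDiag.2 ⟨Finset.mem_univ _, Finset.mem_univ _, huv⟩
    have h := Finset.single_le_sum (f := fun q : N × N =>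
        (if s q.1 = true ∧ s q.2 = true then wtAux p s else 0))
      (fun q _ => hnn s q) hmem
    simpa [hu.2, hv.2] using h
  calc ∑ s ∈ univ.filter (fun s : N → Bool =>
        2 ≤ (univ.filter (fun u => s u = true)).card), wtAux p s
      ≤ ∑ s ∈ univ.filter (fun s : N → Bool =>
        2 ≤ (univ.filter (fun u => s u = true)).card),
        ∑ q ∈ univ.offDiag, (if s q.1 = true ∧ s q.2 = true then wtAux p s else 0) :=
        Finset.sum_le_sum hpair
    _ ≤ ∑ s : N → Bool,
        ∑ q ∈ univ.offDiag, (if s q.1 = true ∧ s q.2 = true then wtAux p s else 0) := by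
        refine Finset.sum_le_sum_of_subset_of_nonneg (Finset.filter_subset _ _) ?_
        intro s _ _
        exact Finset.sum_nonneg fun q _ => hnn s q
    _ = ∑ q ∈ univ.offDiag, ∑ s : N → Bool,
        (if s q.1 = true ∧ s q.2 = true then wtAux p s else 0) := Finset.sum_comm
    _ = ∑ q ∈ univ.offDiag, p q.1 * p q.2 := by
        refine Finset.sum_congr rfl fun q hq => ?_
        rw [← Finset.sum_filter]
        exact wtAux_marg_pair p (Finset.mem_offDiag.1 hq).2.2
    _ ≤ ∑ q ∈ univ ×ˢ univ, p q.1 * p q.2 := by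
        refine Finset.sum_le_sum_of_subset_of_nonneg ?_ ?_
        · intro q hq
          exact Finset.mem_product.2 ⟨Finset.mem_univ _, Finset.mem_univ _⟩
        · intro q _ _
          exact mul_nonneg (hp q.1).1 (hp q.2).1
    _ = (∑ u, p u) * (∑ u, p u) := by
        rw [Finset.sum_product]
        rw [← Finset.sum_mul_sum]

end QB13

section QB1
variable {N : Type} [Fintype N] [DecidableEq N] {p : N → ℝ}

lemma prod_one_sub_le_exp (hp : ∀ u, p u ∈ Set.Icc (0:ℝ) 1) (A : Finset N) :
    ∏ u ∈ A, (1 - p u) ≤ Real.exp (-(∑ u ∈ A, p u)) := by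
  have : Real.exp (-(∑ u ∈ A, p u)) = ∏ u ∈ A, Real.exp (-(p u)) := by
    rw [← Real.exp_sum, ← Finset.sum_neg_distrib]
  rw [this]
  refine Finset.prod_le_prod (fun u _ => by linarith [(hp u).2]) (fun u _ => ?_)
  linarith [Real.add_one_le_exp (-(p u))]

/-- singleton weight -/
lemma wtAux_single (p : N → ℝ) (u : N) :
    wtAux p (fun v => decide (v = u)) = p u * ∏ v ∈ univ.erase u, (1 - p v) := by
  unfold wtAux
  rw [← Finset.mul_prod_erase univ _ (Finset.mem_univ u)]
  simp only [decide_eq_true_eq, if_true]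
  congr 1
  refine Finset.prod_congr rfl fun v hv => ?_
  rw [if_neg (Finset.mem_erase.1 hv).1]

/-- low-count bound: if `d > 20`, the weight of `dhat < 2` is at most 1/4. -/
lemma qbound1 (hp : ∀ u, p u ∈ Set.Icc (0:ℝ) 1) (hd : 20 < ∑ u, p u) :
    ∑ s ∈ univ.filter (fun s : N → Bool =>
        (univ.filter (fun u => s u = true)).card < 2), wtAux p s ≤ 1/4 := by
  classical
  set d := ∑ u, p u with hdd
  -- the bad set is contained in {⊥} ∪ {singletons}
  have hsub : univ.filter (fun s : N → Bool =>
      (univ.filter (fun u => s u = true)).card < 2) ⊆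
      insert (fun _ => false) (univ.image (fun u (v : N) => decide (v = u))) := by
    intro s hs
    rw [Finset.mem_filter] at hs
    have hc2 := hs.2
    interval_cases hc : (univ.filter (fun u => s u = true)).card
    · have hemp := Finset.card_eq_zero.1 hc
      have : s = fun _ => false := by
        funext v
        by_contra hv
        have : s v = true := by revert hv; cases s v <;> simp
        have : v ∈ univ.filter (fun u => s u = true) := by simp [this]
        rw [hemp] at this
        exact absurd this (Finset.notMem_empty v)
      rw [this]
      exact Finset.mem_insert_self _ _
    · obtain ⟨u, hu⟩ := Finset.card_eq_one.1 hc
      have : s = fun v => decide (v = u) := by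
        funext v
        have hiff : s v = true ↔ v = u := by
          constructor
          · intro h
            have : v ∈ univ.filter (fun u => s u = true) := by simp [h]
            rw [hu] at this
            exact Finset.mem_singleton.1 this
          · intro h
            have : u ∈ univ.filter (fun u => s u = true) := by rw [hu]; simp
            rw [Finset.mem_filter] at this
            rw [h]; exact this.2
        cases hv : s v
        · have hne : v ≠ u := fun h => by simp [hiff.2 h] at hv
          simp [hv, hne]
        · simp [hiff.1 hv]
      rw [this]
      exact Finset.mem_insert_of_mem (Finset.mem_image_of_mem _ (Finset.mem_univ u))
  have hnotmem : (fun _ => false) ∉ univ.image (fun u (v : N) => decide (v = u)) := by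
    intro h
    obtain ⟨u, _, hu⟩ := Finset.mem_image.1 h
    have := congrFun hu u
    simp at this
  calc ∑ s ∈ univ.filter (fun s : N → Bool =>
        (univ.filter (fun u => s u = true)).card < 2), wtAux p s
      ≤ ∑ s ∈ insert (fun _ => false) (univ.image (fun u (v : N) => decide (v = u))),
          wtAux p s :=
        Finset.sum_le_sum_of_subset_of_nonneg hsub (fun s _ _ => wtAux_nonneg hp s)
    _ = wtAux p (fun _ => false) + ∑ s ∈ univ.image (fun u (v : N) => decide (v = u)),
          wtAux p s := Finset.sum_insert hnotmem
    _ ≤ Real.exp (-d) + d * (Real.exp 1 * Real.exp (-d)) := by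
        gcongr
        · -- weight of bottom
          have : wtAux p (fun _ => false) = ∏ u : N, (1 - p u) := by
            unfold wtAux; simp
          rw [this]
          exact prod_one_sub_le_exp hp univ
        · -- weight of singletons
          rw [Finset.sum_image (fun u _ u' _ h => by
            have := congrFun h u; simpa using this)]
          have hb : ∀ u : N, wtAux p (fun v => decide (v = u)) ≤
              p u * (Real.exp 1 * Real.exp (-d)) := by
            intro u
            rw [wtAux_single]
            refine mul_le_mul_of_nonneg_left ?_ (hp u).1
            calc ∏ v ∈ univ.erase u, (1 - p v)
                ≤ Real.exp (-(∑ v ∈ univ.erase u, p v)) := prod_one_sub_le_exp hp _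
              _ ≤ Real.exp 1 * Real.exp (-d) := by
                  rw [← Real.exp_add]
                  apply Real.exp_le_exp.2
                  have : ∑ v ∈ univ.erase u, p v = d - p u := by
                    rw [hdd, ← Finset.sum_erase_add univ p (Finset.mem_univ u)]
                    ring
                  rw [this]
                  linarith [(hp u).2]
          calc ∑ u : N, wtAux p (fun v => decide (v = u))
              ≤ ∑ u : N, p u * (Real.exp 1 * Real.exp (-d)) := Finset.sum_le_sum fun u _ => hb u
            _ = d * (Real.exp 1 * Real.exp (-d)) := by rw [← Finset.sum_mul, ← hdd]
    _ ≤ 1/4 := by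
        have he : Real.exp 1 ≤ 3 := by
          have := Real.exp_one_lt_d9
          linarith
        have hexpd : (1 + d/3)^3 ≤ Real.exp d := by
          have h1 : Real.exp d = (Real.exp (d/3))^3 := by
            rw [← Real.exp_nat_mul]
            congr 1
            push_cast
            ring
          rw [h1]
          have h2 : (0:ℝ) ≤ 1 + d/3 := by linarith
          exact pow_le_pow_left₀ h2 (by linarith [Real.add_one_le_exp (d/3)]) 3
        have hd2 : (400:ℝ) < d^2 := by nlinarith
        have hd3 : 400*d < d^3 := by nlinarith
        have h4 : 4*(1+3*d) ≤ Real.exp d := by nlinarith [hexpd, hd2, hd3]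
        have hepos := Real.exp_pos d
        have hkey : (1 + 3*d) * Real.exp (-d) ≤ 1/4 := by
          rw [Real.exp_neg, ← div_eq_mul_inv, div_le_iff₀ hepos]
          linarith
        have hd0 : (0:ℝ) ≤ d := by linarith
        have hstep : d * (Real.exp 1 * Real.exp (-d)) ≤ 3 * d * Real.exp (-d) := by
          have h5 := (Real.exp_pos (-d)).le
          have := mul_le_mul_of_nonneg_left (mul_le_mul_of_nonneg_right he h5) hd0
          nlinarith [this]
        have hexp : (1+3*d) * Real.exp (-d) = Real.exp (-d) + 3*d*Real.exp (-d) := by ring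
        linarith [hkey, hstep, hexp]

end QB1

section Count
/-- Chernoff-type counting bound: if the per-repetition bad weight is at most 1/4,
then the weight of outcomes where at least half of `k` repetitions are bad is at
most `(7/8)^k`. -/
lemma count_bound {S : Type} [Fintype S] [DecidableEq S] (k : ℕ) (W : S → ℝ)
    (hW : ∀ s, 0 ≤ W s) (hW1 : ∑ s, W s = 1) (Q : S → Prop) [DecidablePred Q]
    (hq : ∑ s ∈ univ.filter Q, W s ≤ 1/4) :
    ∑ z ∈ univ.filter (fun z : Fin k → S =>
        k ≤ 2 * (univ.filter (fun j => Q (z j))).card), ∏ j, W (z j)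
      ≤ (7/8)^k := by
  classical
  set c : S → ℝ := fun s => if Q s then 4 else 1 with hc
  have hc1 : ∀ s, (1:ℝ) ≤ c s := by
    intro s; rw [hc]; dsimp only; split <;> norm_num
  have key1 : ∀ z ∈ univ.filter (fun z : Fin k → S =>
      k ≤ 2 * (univ.filter (fun j => Q (z j))).card),
      (2:ℝ)^k * ∏ j, W (z j) ≤ ∏ j, (c (z j) * W (z j)) := by
    intro z hz
    rw [Finset.mem_filter] at hz
    rw [Finset.prod_mul_distrib]
    have hprodc : ∏ j, c (z j) = (4:ℝ)^((univ.filter (fun j => Q (z j))).card) := by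
      rw [hc]
      dsimp only
      rw [Finset.prod_ite, Finset.prod_const, Finset.prod_const]
      simp
    have h2k : (2:ℝ)^k ≤ ∏ j, c (z j) := by
      rw [hprodc]
      have : (4:ℝ)^((univ.filter (fun j => Q (z j))).card)
          = (2:ℝ)^(2 * (univ.filter (fun j => Q (z j))).card) := by
        rw [pow_mul]; norm_num
      rw [this]
      exact pow_le_pow_right₀ (by norm_num) hz.2
    exact mul_le_mul_of_nonneg_right h2k (Finset.prod_nonneg fun j _ => hW (z j))
  have key3 : ∑ s, c s * W s ≤ 7/4 := by
    have : ∀ s, c s * W s = W s + (if Q s then 3 * W s else 0) := by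
      intro s; rw [hc]; dsimp only; split <;> ring
    simp_rw [this]
    rw [Finset.sum_add_distrib, hW1, ← Finset.sum_filter, ← Finset.mul_sum]
    linarith
  have key2 : ∑ z : Fin k → S, ∏ j, (c (z j) * W (z j)) = (∑ s, c s * W s)^k := by
    rw [sum_prod_pi (fun _ s => c s * W s), Finset.prod_const]
    simp
  have step : (2:ℝ)^k * ∑ z ∈ univ.filter (fun z : Fin k → S =>
      k ≤ 2 * (univ.filter (fun j => Q (z j))).card), ∏ j, W (z j) ≤ (7/4)^k := by
    rw [Finset.mul_sum]
    calc ∑ z ∈ univ.filter (fun z : Fin k → S =>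
        k ≤ 2 * (univ.filter (fun j => Q (z j))).card), (2:ℝ)^k * ∏ j, W (z j)
        ≤ ∑ z ∈ univ.filter (fun z : Fin k → S =>
        k ≤ 2 * (univ.filter (fun j => Q (z j))).card), ∏ j, (c (z j) * W (z j)) :=
          Finset.sum_le_sum key1
      _ ≤ ∑ z : Fin k → S, ∏ j, (c (z j) * W (z j)) := by
          refine Finset.sum_le_sum_of_subset_of_nonneg (Finset.filter_subset _ _) ?_
          intro z _ _
          exact Finset.prod_nonneg fun j _ =>
            mul_nonneg (le_trans zero_le_one (hc1 (z j))) (hW (z j))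
      _ = (∑ s, c s * W s)^k := key2
      _ ≤ (7/4)^k := by
          refine pow_le_pow_left₀ ?_ key3 k
          exact Finset.sum_nonneg fun s _ =>
            mul_nonneg (le_trans zero_le_one (hc1 s)) (hW s)
  have h2pos : (0:ℝ) < (2:ℝ)^k := by positivity
  rw [← le_div_iff₀' h2pos] at step
  calc ∑ z ∈ univ.filter (fun z : Fin k → S =>
      k ≤ 2 * (univ.filter (fun j => Q (z j))).card), ∏ j, W (z j)
      ≤ (7/4)^k / (2:ℝ)^k := step
    _ = (7/8)^k := by
        rw [← div_pow]
        norm_num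
end Count

section Arith
lemma arith_bound (Δ : ℕ) (hΔ : 2 ≤ Δ) (C : ℝ) (hC : 1 ≤ C) (k : ℕ)
    (hk : 64 * C * Real.log Δ ≤ k) :
    3 * (7/8:ℝ)^k ≤ (Δ:ℝ)^(-C) := by
  have hΔpos : (0:ℝ) < Δ := by positivity
  have hΔ2 : (2:ℝ) ≤ (Δ:ℝ) := by exact_mod_cast hΔ
  have hlog78 : Real.log (7/8) ≤ -(1/8) := by
    have := Real.log_le_sub_one_of_pos (by norm_num : (0:ℝ) < 7/8)
    linarith
  have hlog3 : Real.log 3 ≤ 2 := by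
    have := Real.log_le_sub_one_of_pos (by norm_num : (0:ℝ) < 3)
    linarith
  have hlogΔ : Real.log 2 ≤ Real.log Δ := Real.log_le_log (by norm_num) hΔ2
  have hl2 : (0.6931:ℝ) ≤ Real.log 2 := by linarith [Real.log_two_gt_d9]
  have hCld : (0.6931:ℝ) ≤ C * Real.log Δ := by nlinarith
  have hrw : (Δ:ℝ)^(-C) = Real.exp (-C * Real.log Δ) := by
    rw [Real.rpow_def_of_pos hΔpos]
    ring_nf
  have hlhs : 3 * (7/8:ℝ)^k = Real.exp (Real.log 3 + k * Real.log (7/8)) := by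
    rw [Real.exp_add]
    congr 1
    · rw [Real.exp_log (by norm_num : (0:ℝ) < 3)]
    · rw [← Real.log_pow, Real.exp_log (by positivity)]
  rw [hrw, hlhs]
  apply Real.exp_le_exp.2
  have hkm : (k:ℝ) * Real.log (7/8) ≤ (k:ℝ) * (-(1/8)) :=
    mul_le_mul_of_nonneg_left hlog78 (Nat.cast_nonneg k)
  nlinarith [hkm, hk, hCld, hlog3]
end Arith

section Meas
open MeasureTheory ProbabilityTheory

variable {k : ℕ} {N : Type} [Fintype N] [DecidableEq N] {Ω : Type} [MeasurableSpace Ω]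
  {μ : Measure Ω} [IsProbabilityMeasure μ] {b : (Fin k × N) → Ω → Bool} {p : N → ℝ}

lemma atom_measure (hp : ∀ u, p u ∈ Set.Icc (0:ℝ) 1)
    (hmeas : ∀ x, Measurable (b x))
    (hindep : iIndepFun b μ)
    (hber : ∀ x : Fin k × N, μ {ω | b x ω = true} = ENNReal.ofReal (p x.2))
    (y : (Fin k × N) → Bool) :
    μ {ω | ∀ x, b x ω = y x} = ENNReal.ofReal (wtAux (fun x : Fin k × N => p x.2) y) := by
  classical
  have hset : {ω | ∀ x, b x ω = y x}
      = ⋂ x ∈ (Finset.univ : Finset (Fin k × N)), (b x)⁻¹' {y x} := by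
    ext ω
    simp [Set.mem_iInter, Set.mem_preimage]
  have hfac : ∀ x : Fin k × N,
      μ ((b x)⁻¹' {y x}) = ENNReal.ofReal (if y x = true then p x.2 else 1 - p x.2) := by
    intro x
    cases hyx : y x
    · have hpre : (b x)⁻¹' {false} = {ω | b x ω = true}ᶜ := by
        ext ω
        simp [Set.mem_preimage]
      have hms : MeasurableSet ((b x)⁻¹' {true}) := hmeas x (measurableSet_singleton true)
      have hpre2 : {ω | b x ω = true} = (b x)⁻¹' {true} := by
        ext ω; simp [Set.mem_preimage]
      rw [hpre, hpre2, measure_compl hms (measure_ne_top μ _), ← hpre2, hber x]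
      simp only [if_neg (Bool.false_ne_true)]
      rw [measure_univ, ← ENNReal.ofReal_one, ← ENNReal.ofReal_sub _ (hp x.2).1]
    · have hpre : (b x)⁻¹' {true} = {ω | b x ω = true} := by
        ext ω
        simp [Set.mem_preimage]
      rw [hpre, hber x]
      simp
  rw [hset, hindep.measure_inter_preimage_eq_mul Finset.univ
    (sets := fun x => {y x}) (fun x _ => by trivial)]
  unfold wtAux
  calc ∏ x : Fin k × N, μ ((b x)⁻¹' {y x})
      = ∏ x : Fin k × N, ENNReal.ofReal (if y x = true then p x.2 else 1 - p x.2) :=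
        Finset.prod_congr rfl fun x _ => hfac x
    _ = ENNReal.ofReal (∏ x : Fin k × N, (if y x = true then p x.2 else 1 - p x.2)) :=
        (ENNReal.ofReal_prod_of_nonneg (fun x _ => by
          rcases hp x.2 with ⟨h0, h1⟩
          split <;> linarith)).symm

lemma event_measure (hp : ∀ u, p u ∈ Set.Icc (0:ℝ) 1)
    (hmeas : ∀ x, Measurable (b x))
    (hindep : iIndepFun b μ)
    (hber : ∀ x : Fin k × N, μ {ω | b x ω = true} = ENNReal.ofReal (p x.2))
    (P : ((Fin k × N) → Bool) → Prop) [DecidablePred P] :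
    μ {ω | P (fun x => b x ω)}
      = ENNReal.ofReal (∑ y ∈ univ.filter P, wtAux (fun x : Fin k × N => p x.2) y) := by
  classical
  have hset : {ω | P (fun x => b x ω)}
      = ⋃ y ∈ univ.filter P, {ω | ∀ x, b x ω = y x} := by
    ext ω
    simp only [Set.mem_setOf_eq, Set.mem_iUnion, Finset.mem_filter, Finset.mem_univ, true_and]
    constructor
    · intro h
      exact ⟨fun x => b x ω, h, fun x => rfl⟩
    · rintro ⟨y, hy, hagree⟩
      have : (fun x => b x ω) = y := funext hagree
      rw [this]
      exact hy
  have hdisj : Set.PairwiseDisjoint ↑(univ.filter P)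
      (fun y : (Fin k × N) → Bool => {ω | ∀ x, b x ω = y x}) := by
    intro y hy y' hy' hne
    simp only [Function.onFun]
    rw [Set.disjoint_left]
    intro ω hω hω'
    exact hne (funext fun x => (hω x).symm.trans (hω' x))
  have hmsA : ∀ y ∈ univ.filter P, MeasurableSet {ω | ∀ x, b x ω = y x} := by
    intro y _
    have hA : {ω | ∀ x, b x ω = y x} = ⋂ x, (b x)⁻¹' {y x} := by
      ext ω; simp [Set.mem_preimage]
    rw [hA]
    exact MeasurableSet.iInter fun x => (hmeas x) (by trivial)
  rw [hset, measure_biUnion_finset hdisj hmsA]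
  calc ∑ y ∈ univ.filter P, μ {ω | ∀ x, b x ω = y x}
      = ∑ y ∈ univ.filter P, ENNReal.ofReal (wtAux (fun x : Fin k × N => p x.2) y) :=
        Finset.sum_congr rfl fun y _ => atom_measure hp hmeas hindep hber y
    _ = ENNReal.ofReal (∑ y ∈ univ.filter P, wtAux (fun x : Fin k × N => p x.2) y) :=
        (ENNReal.ofReal_sum_of_nonneg (fun y _ =>
          wtAux_nonneg (fun x : Fin k × N => ⟨(hp x.2).1, (hp x.2).2⟩) y)).symm

end Meas

section Helpers

lemma halfbad {k : ℕ} (R : Fin k → Prop) [DecidablePred R]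
    (h : ((univ.filter R).card : ℝ) ≤ k/2) :
    k ≤ 2 * (univ.filter (fun j => ¬ R j)).card := by
  classical
  have hsplit := Finset.card_filter_add_card_filter_not
    (s := (univ : Finset (Fin k))) (p := R)
  rw [Finset.card_univ, Fintype.card_fin] at hsplit
  have h2 : 2 * (univ.filter R).card ≤ k := by
    exact_mod_cast (by push_cast; linarith : ((2 * (univ.filter R).card : ℕ) : ℝ) ≤ (k:ℕ))
  omega

lemma sum_union_le {α : Type} [DecidableEq α] (s t : Finset α) (f : α → ℝ)
    (hf : ∀ a, 0 ≤ f a) :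
    ∑ a ∈ s ∪ t, f a ≤ ∑ a ∈ s, f a + ∑ a ∈ t, f a := by
  have h := Finset.sum_union_inter (s₁ := s) (s₂ := t) (f := f)
  have h2 : 0 ≤ ∑ a ∈ s ∩ t, f a := Finset.sum_nonneg fun a _ => hf a
  linarith

lemma curry_sum {k : ℕ} {N : Type} [Fintype N] [DecidableEq N] (p : N → ℝ)
    (A : ((Fin k × N) → Bool) → Prop) [DecidablePred A] :
    ∑ y ∈ univ.filter A, wtAux (fun x : Fin k × N => p x.2) y
      = ∑ z ∈ univ.filter (fun z : Fin k → N → Bool => A (fun x => z x.1 x.2)),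
          ∏ j, wtAux p (z j) := by
  classical
  rw [Finset.sum_filter, Finset.sum_filter]
  apply Fintype.sum_equiv (Equiv.curry (Fin k) N Bool)
  intro y
  have hA : A (fun x => (Equiv.curry (Fin k) N Bool y) x.1 x.2) = A y := rfl
  have hw : wtAux (fun x : Fin k × N => p x.2) y = ∏ j, wtAux p (fun u => y (j,u)) := by
    unfold wtAux
    rw [Fintype.prod_prod_type]
  by_cases h : A y
  · rw [if_pos h, if_pos (by rw [hA]; exact h), hw]
    rfl
  · rw [if_neg h, if_neg (by rw [hA]; exact h)]

end Helpers

open MeasureTheory ProbabilityTheory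

/-- Lemma A.1 of the paper: there is an absolute constant `c ≥ 1` such that for any
`Δ ≥ 2`, `C ≥ 1`, and `k ≥ c·C·ln Δ`, given mutually independent Bernoulli samples
`b (j, u)` with parameters `p u` (over `k` repetitions `j`), with probability at
least `1 - Δ^{-C}` the following hold simultaneously, where `d = ∑ u, p u` and
`dhat j = #{u | b (j,u) = 1}`: (1) if `d > 20` then `dhat j ≥ 2` for more than half
of the `j`; (2) `dhat j ≤ 4d` for more than half of the `j`; (3) if `d < 0.4` then
`dhat j < 2` for more than half of the `j`. -/
theorem median_estimate_good :
    ∃ c : ℝ, 1 ≤ c ∧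
      ∀ (Δ : ℕ), 2 ≤ Δ → ∀ (C : ℝ), 1 ≤ C → ∀ (k : ℕ),
        c * C * Real.log Δ ≤ k →
      ∀ {N : Type} [Fintype N] (p : N → ℝ), (∀ u, p u ∈ Set.Icc (0 : ℝ) 1) →
      ∀ {Ω : Type} [MeasurableSpace Ω] (μ : Measure Ω) [IsProbabilityMeasure μ]
        (b : (Fin k × N) → Ω → Bool),
        (∀ x, Measurable (b x)) →
        iIndepFun b μ →
        (∀ x : Fin k × N, μ {ω | b x ω = true} = ENNReal.ofReal (p x.2)) →
        ENNReal.ofReal (1 - (Δ : ℝ) ^ (-C)) ≤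
          μ {ω |
            (20 < ∑ u, p u →
              (k : ℝ) / 2 <
                ((Finset.univ.filter (fun j : Fin k =>
                  2 ≤ (Finset.univ.filter (fun u : N => b (j, u) ω = true)).card)).card : ℝ)) ∧
            ((k : ℝ) / 2 <
                ((Finset.univ.filter (fun j : Fin k =>
                  ((Finset.univ.filter (fun u : N => b (j, u) ω = true)).card : ℝ)
                    ≤ 4 * ∑ u, p u)).card : ℝ)) ∧
            (∑ u, p u < 0.4 →
              (k : ℝ) / 2 <
                ((Finset.univ.filter (fun j : Fin k =>
                  (Finset.univ.filter (fun u : N => b (j, u) ω = true)).card < 2)).card : ℝ))} := by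
  classical
  refine ⟨64, by norm_num, ?_⟩
  intro Δ hΔ C hC k hk N _ p hp Ω _ μ _ b hmeas hindep hber
  classical
  set P : ((Fin k × N) → Bool) → Prop := fun y =>
    (20 < ∑ u, p u →
      (k : ℝ) / 2 <
        ((Finset.univ.filter (fun j : Fin k =>
          2 ≤ (Finset.univ.filter (fun u : N => y (j, u) = true)).card)).card : ℝ)) ∧
    ((k : ℝ) / 2 <
        ((Finset.univ.filter (fun j : Fin k =>
          ((Finset.univ.filter (fun u : N => y (j, u) = true)).card : ℝ)
            ≤ 4 * ∑ u, p u)).card : ℝ)) ∧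
    (∑ u, p u < 0.4 →
      (k : ℝ) / 2 <
        ((Finset.univ.filter (fun j : Fin k =>
          (Finset.univ.filter (fun u : N => y (j, u) = true)).card < 2)).card : ℝ)) with hP
  have hseteq : {ω |
            (20 < ∑ u, p u →
              (k : ℝ) / 2 <
                ((Finset.univ.filter (fun j : Fin k =>
                  2 ≤ (Finset.univ.filter (fun u : N => b (j, u) ω = true)).card)).card : ℝ)) ∧
            ((k : ℝ) / 2 <
                ((Finset.univ.filter (fun j : Fin k =>
                  ((Finset.univ.filter (fun u : N => b (j, u) ω = true)).card : ℝ)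
                    ≤ 4 * ∑ u, p u)).card : ℝ)) ∧
            (∑ u, p u < 0.4 →
              (k : ℝ) / 2 <
                ((Finset.univ.filter (fun j : Fin k =>
                  (Finset.univ.filter (fun u : N => b (j, u) ω = true)).card < 2)).card : ℝ))}
      = {ω | P (fun x => b x ω)} := rfl
  rw [hseteq, event_measure hp hmeas hindep hber P]
  apply ENNReal.ofReal_le_ofReal
  -- now a real inequality
  set W : ((Fin k × N) → Bool) → ℝ := fun y => wtAux (fun x : Fin k × N => p x.2) y with hW
  have hWnn : ∀ y, 0 ≤ W y := fun y =>
    wtAux_nonneg (fun x : Fin k × N => ⟨(hp x.2).1, (hp x.2).2⟩) y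
  have htot : ∑ y ∈ univ.filter P, W y + ∑ y ∈ univ.filter (fun y => ¬ P y), W y = 1 := by
    rw [Finset.sum_filter_add_sum_filter_not]
    exact wtAux_sum_one (fun x : Fin k × N => p x.2)
  suffices hbad : ∑ y ∈ univ.filter (fun y => ¬ P y), W y ≤ (Δ:ℝ)^(-C) by linarith
  -- three bad-majority events
  set d := ∑ u, p u with hd
  set A1 : ((Fin k × N) → Bool) → Prop := fun y => 20 < d ∧
      k ≤ 2 * (univ.filter (fun j : Fin k =>
        (univ.filter (fun u : N => y (j,u) = true)).card < 2)).card with hA1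
  set A2 : ((Fin k × N) → Bool) → Prop := fun y =>
      k ≤ 2 * (univ.filter (fun j : Fin k =>
        4 * d < ((univ.filter (fun u : N => y (j,u) = true)).card : ℝ))).card with hA2
  set A3 : ((Fin k × N) → Bool) → Prop := fun y => d < 0.4 ∧
      k ≤ 2 * (univ.filter (fun j : Fin k =>
        2 ≤ (univ.filter (fun u : N => y (j,u) = true)).card)).card with hA3
  have hsub : univ.filter (fun y => ¬ P y) ⊆
      (univ.filter A1 ∪ univ.filter A2) ∪ univ.filter A3 := by
    intro y hy
    rw [Finset.mem_filter] at hy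
    have hnp := hy.2
    rw [hP] at hnp
    simp only [not_and_or] at hnp
    rcases hnp with h1 | h23
    · -- condition (1) fails
      push_neg at h1
      obtain ⟨hd20, hle⟩ := h1
      refine Finset.mem_union_left _ (Finset.mem_union_left _ ?_)
      rw [Finset.mem_filter]
      refine ⟨Finset.mem_univ _, hd20, ?_⟩
      have hb := halfbad (fun j : Fin k =>
        2 ≤ (univ.filter (fun u : N => y (j,u) = true)).card) hle
      have heq : (univ.filter (fun j : Fin k =>
          (univ.filter (fun u : N => y (j,u) = true)).card < 2))
          = (univ.filter (fun j : Fin k =>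
            ¬ 2 ≤ (univ.filter (fun u : N => y (j,u) = true)).card)) := by
        apply Finset.filter_congr
        intro j _
        omega
      rw [heq]
      exact hb
    · rcases h23 with h2 | h3
      · -- condition (2) fails
        rw [not_lt] at h2
        refine Finset.mem_union_left _ (Finset.mem_union_right _ ?_)
        rw [Finset.mem_filter]
        refine ⟨Finset.mem_univ _, ?_⟩
        have hb := halfbad (fun j : Fin k =>
          ((univ.filter (fun u : N => y (j,u) = true)).card : ℝ) ≤ 4 * d) h2
        have heq : (univ.filter (fun j : Fin k =>
            4 * d < ((univ.filter (fun u : N => y (j,u) = true)).card : ℝ)))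
            = (univ.filter (fun j : Fin k =>
              ¬ ((univ.filter (fun u : N => y (j,u) = true)).card : ℝ) ≤ 4 * d)) := by
          apply Finset.filter_congr
          intro j _
          simp [not_le]
        convert hb using 3
      · -- condition (3) fails
        push_neg at h3
        obtain ⟨hd04, hle⟩ := h3
        refine Finset.mem_union_right _ ?_
        rw [Finset.mem_filter]
        refine ⟨Finset.mem_univ _, hd04, ?_⟩
        have hb := halfbad (fun j : Fin k =>
          (univ.filter (fun u : N => y (j,u) = true)).card < 2) hle
        have heq : (univ.filter (fun j : Fin k =>
            2 ≤ (univ.filter (fun u : N => y (j,u) = true)).card))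
            = (univ.filter (fun j : Fin k =>
              ¬ (univ.filter (fun u : N => y (j,u) = true)).card < 2)) := by
          apply Finset.filter_congr
          intro j _
          omega
        rw [heq]
        exact hb
  have hd0 : 0 ≤ d := Finset.sum_nonneg fun u _ => (hp u).1
  have hB1 : ∑ y ∈ univ.filter A1, W y ≤ (7/8:ℝ)^k := by
    rw [hW]
    rw [curry_sum p A1]
    by_cases hd20 : 20 < d
    · have hq := qbound1 hp hd20
      have hcb := count_bound k (wtAux p) (wtAux_nonneg hp) (wtAux_sum_one p)
        (fun s : N → Bool => (univ.filter (fun u => s u = true)).card < 2) hq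
      refine le_trans (le_of_eq ?_) hcb
      apply Finset.sum_congr
      · apply Finset.filter_congr
        intro z _
        simp only [hA1, hd20, true_and]
      · intro _ _; rfl
    · have : univ.filter (fun z : Fin k → N → Bool => A1 (fun x => z x.1 x.2)) = ∅ := by
        apply Finset.filter_false_of_mem
        intro z _
        simp only [hA1]
        tauto
      rw [this]
      simp
      positivity
  have hB2 : ∑ y ∈ univ.filter A2, W y ≤ (7/8:ℝ)^k := by
    rw [hW]
    rw [curry_sum p A2]
    have hq := qbound2 hp
    have hcb := count_bound k (wtAux p) (wtAux_nonneg hp) (wtAux_sum_one p)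
      (fun s : N → Bool => 4 * (∑ u, p u) < ((univ.filter (fun u => s u = true)).card : ℝ)) hq
    refine le_trans (le_of_eq ?_) hcb
    apply Finset.sum_congr
    · apply Finset.filter_congr
      intro z _
      simp only [hA2, hd]
    · intro _ _; rfl
  have hB3 : ∑ y ∈ univ.filter A3, W y ≤ (7/8:ℝ)^k := by
    rw [hW]
    rw [curry_sum p A3]
    by_cases hd04 : d < 0.4
    · have hq : ∑ s ∈ univ.filter (fun s : N → Bool =>
          2 ≤ (univ.filter (fun u => s u = true)).card), wtAux p s ≤ 1/4 := by
        have := qbound3 hp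
        rw [← hd] at this
        nlinarith [this, hd0, hd04]
      have hcb := count_bound k (wtAux p) (wtAux_nonneg hp) (wtAux_sum_one p)
        (fun s : N → Bool => 2 ≤ (univ.filter (fun u => s u = true)).card) hq
      refine le_trans (le_of_eq ?_) hcb
      apply Finset.sum_congr
      · apply Finset.filter_congr
        intro z _
        simp only [hA3, hd04, true_and]
      · intro _ _; rfl
    · have : univ.filter (fun z : Fin k → N → Bool => A3 (fun x => z x.1 x.2)) = ∅ := by
        apply Finset.filter_false_of_mem
        intro z _
        simp only [hA3]
        tauto
      rw [this]
      simp
      positivity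
  calc ∑ y ∈ univ.filter (fun y => ¬ P y), W y
      ≤ ∑ y ∈ (univ.filter A1 ∪ univ.filter A2) ∪ univ.filter A3, W y :=
        Finset.sum_le_sum_of_subset_of_nonneg hsub (fun y _ _ => hWnn y)
    _ ≤ ∑ y ∈ univ.filter A1 ∪ univ.filter A2, W y + ∑ y ∈ univ.filter A3, W y :=
        sum_union_le _ _ _ hWnn
    _ ≤ (∑ y ∈ univ.filter A1, W y + ∑ y ∈ univ.filter A2, W y)
          + ∑ y ∈ univ.filter A3, W y := by
        have := sum_union_le (univ.filter A1) (univ.filter A2) W hWnn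
        linarith
    _ ≤ ((7/8:ℝ)^k + (7/8:ℝ)^k) + (7/8:ℝ)^k := by linarith
    _ = 3 * (7/8:ℝ)^k := by ring
    _ ≤ (Δ:ℝ)^(-C) := arith_bound Δ hΔ C hC k hk
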